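/- Let f: [0,∞) → ℝ be strictly increasing with f(0) = 0 such that Λ_f|_{[0,R]} satisfies a doubling condition for some R ∈ (0, f⁻¹(1)), with doubling constant σ and associated constants C', T from the differences-of-powers lemma. Then there exists ρ ∈ (0, 1/2] such that f⁻¹(t) − f⁻¹(t/2) ≤ C' · f⁻¹(t/2) for all t ∈ (0, ρ). -/
import Mathlib


open Set

/-- `Λ_f(x) = -1/log(f x)` (with the convention `Λ_f(0) = 0`, which holds
automatically since `f 0 = 0` and `Real.log 0 = 0` in Mathlib). -/
noncomputable def Lam (f : ℝ → ℝ) (x : ℝ) : ℝ := -1 / Real.log (f x)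

/-- If `Λ_f` satisfies a doubling condition on `[0,R]` with constant `σ`, with
associated constants `C', T` from the differences-of-powers lemma (i.e.
`G_f(2s) − G_f(s) ≤ C' G_f(s)` for `s ∈ [0,T]`, where `G_f = Λ_f⁻¹` and
`f⁻¹(t) = G_f(1/log(1/t))`), then there is a `ρ ∈ (0, 1/2]` such that
`f⁻¹(t) − f⁻¹(t/2) ≤ C' · f⁻¹(t/2)` for all `t ∈ (0, ρ)`. -/
theorem finv_comparison (f finv G : ℝ → ℝ) (R σ C' T : ℝ)
    (hf : StrictMonoOn f (Ici 0)) (hf0 : f 0 = 0)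
    (hR : 0 < R) (hR1 : f R < 1) (hσ : 1 < σ)
    (hdoub : ∀ x ∈ Icc (0:ℝ) (R / σ), 2 * Lam f x ≤ Lam f (σ * x))
    (hC' : 0 < C') (hT : 0 < T)
    (hCT : ∀ s ∈ Icc (0:ℝ) T, G (2 * s) - G s ≤ C' * G s)
    (hGmono : MonotoneOn G (Ici 0))
    (hfinvG : ∀ t ∈ Ioo (0:ℝ) 1, finv t = G (1 / Real.log (1 / t))) :
    ∃ ρ : ℝ, 0 < ρ ∧ ρ ≤ 1 / 2 ∧
      ∀ t ∈ Ioo (0:ℝ) ρ, finv t - finv (t / 2) ≤ C' * finv (t / 2) := by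
  refine ⟨min (1/2) (Real.exp (-(1/(2*T)))), ?_, min_le_left _ _, ?_⟩
  · exact lt_min (by norm_num) (Real.exp_pos _)
  rintro t ⟨ht0, htρ⟩
  have ht12 : t < 1/2 := lt_of_lt_of_le htρ (min_le_left _ _)
  have hte : t < Real.exp (-(1/(2*T))) := lt_of_lt_of_le htρ (min_le_right _ _)
  have ht1 : t < 1 := ht12.trans (by norm_num)
  set L := Real.log (1/t) with hL
  have hLlog2 : Real.log 2 < L := by
    have : (2:ℝ) < 1/t := by
      rw [lt_div_iff₀ ht0]; linarith
    exact Real.log_lt_log (by norm_num) this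
  have hL0 : 0 < L := lt_trans (Real.log_pos (by norm_num)) hLlog2
  have hLT : 1/(2*T) < L := by
    have := Real.log_lt_log ht0 hte
    rw [Real.log_exp] at this
    rw [hL, Real.log_div one_ne_zero (ne_of_gt ht0), Real.log_one]
    linarith
  set s := 1/(2*L) with hs
  have hs0 : 0 < s := by positivity
  have hsT : s ≤ T := by
    rw [hs, div_le_iff₀ (by positivity)]
    rw [div_lt_iff₀ (by positivity)] at hLT
    nlinarith
  have hlog2pos : (0:ℝ) < Real.log 2 := Real.log_pos (by norm_num)
  -- log(1/(t/2)) = log 2 + L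
  have hlog2t : Real.log (1/(t/2)) = Real.log 2 + L := by
    rw [hL, one_div, one_div]
    rw [show (t/2)⁻¹ = 2 * t⁻¹ by field_simp]
    rw [Real.log_mul (by norm_num) (by positivity)]
  have hft : finv t = G (1/L) := by
    rw [hfinvG t ⟨ht0, ht1⟩]
  have hft2 : finv (t/2) = G (1/(Real.log 2 + L)) := by
    rw [hfinvG (t/2) ⟨by linarith, by linarith⟩, hlog2t]
  have h2s : (1:ℝ)/L = 2 * s := by
    rw [hs]; field_simp
  have hsle : s ≤ 1/(Real.log 2 + L) := by
    rw [hs, div_le_div_iff₀ (by positivity) (by positivity)]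
    linarith
  have hGs : G s ≤ G (1/(Real.log 2 + L)) :=
    hGmono (le_of_lt hs0) (by positivity : (0:ℝ) ≤ 1/(Real.log 2 + L)) hsle
  have hkey := hCT s ⟨le_of_lt hs0, hsT⟩
  rw [hft, hft2, h2s]
  calc G (2*s) - G (1/(Real.log 2 + L)) ≤ G (2*s) - G s := by linarith
    _ ≤ C' * G s := hkey
    _ ≤ C' * G (1/(Real.log 2 + L)) := by nlinarith
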